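/- arXiv:1707.02066 — 2 statements merged into one kernel-verified Lean document; each statement's English description precedes it below -/
import Mathlib

section
/- Let (G, X) be a self-similar group action and let M = X* ⋈ G be the associated Zappa–Szép product. Then M is right cancellative (and hence cancellative) if and only if the map φ_u : G_u → G is injective for every u ∈ X*. -/
universe u v w

/-- A self-similar group action `(G, X)`: a group `G`, a set `X`, an action map
`G × X* → X*` and a restriction map `G × X* → G` satisfying (SS1)–(SS8). -/
structure SelfSimilarAction (G : Type u) [Group G] (X : Type v) where
  act : G → FreeMonoid X → FreeMonoid X
  res : G → FreeMonoid X → G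
  /-- (SS1) `1 · u = u` -/
  one_act : ∀ u : FreeMonoid X, act 1 u = u
  /-- (SS2) `(gh) · u = g · (h · u)` -/
  mul_act : ∀ (g h : G) (u : FreeMonoid X), act (g * h) u = act g (act h u)
  /-- (SS3) `g · 1 = 1` -/
  act_one : ∀ g : G, act g 1 = 1
  /-- (SS4) `g · (uv) = (g · u)((g|_u) · v)` -/
  act_mul : ∀ (g : G) (u v : FreeMonoid X), act g (u * v) = act g u * act (res g u) v
  /-- (SS5) `g|_1 = g` -/
  res_one : ∀ g : G, res g 1 = g
  /-- (SS6) `g|_{uv} = (g|_u)|_v` -/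
  res_mul : ∀ (g : G) (u v : FreeMonoid X), res g (u * v) = res (res g u) v
  /-- (SS7) `1|_u = 1` -/
  one_res : ∀ u : FreeMonoid X, res 1 u = 1
  /-- (SS8) `(gh)|_u = (g|_{h·u})(h|_u)` -/
  mul_res : ∀ (g h : G) (u : FreeMonoid X), res (g * h) u = res g (act h u) * res h u

namespace SelfSimilarAction

variable {G : Type u} [Group G] {X : Type v}

/-- The Zappa–Szép product `X* ⋈ G`: underlying set `X* × G`. -/
def ZS (A : SelfSimilarAction G X) : Type (max u v) := FreeMonoid X × G

/-- The element `(u, g)` of `X* ⋈ G`. -/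
def pair (A : SelfSimilarAction G X) (u : FreeMonoid X) (g : G) : A.ZS := (u, g)

/-- The Zappa–Szép product `X* ⋈ G` is a monoid with multiplication
`(u, g)(v, h) = (u (g·v), (g|_v) h)` and identity `(1, 1)`. -/
instance (A : SelfSimilarAction G X) : Monoid A.ZS where
  mul p q := ((p.1 * A.act p.2 q.1, A.res p.2 q.1 * q.2) : FreeMonoid X × G)
  one := (((1 : FreeMonoid X), (1 : G)) : FreeMonoid X × G)
  mul_assoc p q r := by
    show (((p.1 * A.act p.2 q.1) * A.act (A.res p.2 q.1 * q.2) r.1,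
        A.res (A.res p.2 q.1 * q.2) r.1 * r.2) : FreeMonoid X × G) =
      ((p.1 * A.act p.2 (q.1 * A.act q.2 r.1),
        A.res p.2 (q.1 * A.act q.2 r.1) * (A.res q.2 r.1 * r.2)) : FreeMonoid X × G)
    rw [A.mul_act, A.act_mul, A.mul_res, A.res_mul, mul_assoc, mul_assoc]
  one_mul p := by
    show (((1 : FreeMonoid X) * A.act 1 p.1, A.res 1 p.1 * p.2) : FreeMonoid X × G) = p
    rw [A.one_act, A.one_res, one_mul, one_mul]
    exact Prod.mk.eta
  mul_one p := by
    show ((p.1 * A.act p.2 1, A.res p.2 1 * 1) : FreeMonoid X × G) = p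
    rw [A.act_one, A.res_one, mul_one, mul_one]
    exact Prod.mk.eta

end SelfSimilarAction

namespace SelfSimilarAction

variable {G : Type u} [Group G] {X : Type v}

lemma toListInj {Y : Type v} : Function.Injective (FreeMonoid.toList (α := Y)) :=
  fun _ _ h => h

lemma act_act (A : SelfSimilarAction G X) (g h : G) (u : FreeMonoid X) :
    A.act g (A.act h u) = A.act (g * h) u := (A.mul_act g h u).symm

lemma act_leftinv (A : SelfSimilarAction G X) (g : G) (u : FreeMonoid X) :
    A.act g⁻¹ (A.act g u) = u := by
  rw [A.act_act, inv_mul_cancel, A.one_act]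

lemma act_inj (A : SelfSimilarAction G X) (g : G) : Function.Injective (A.act g) := by
  intro a b h
  have := congrArg (A.act g⁻¹) h
  rwa [A.act_leftinv, A.act_leftinv] at this

lemma act_eq_one (A : SelfSimilarAction G X) {g : G} {u : FreeMonoid X}
    (h : A.act g u = 1) : u = 1 := by
  apply A.act_inj g
  rw [h, A.act_one]

lemma length_act_of (A : SelfSimilarAction G X) (g : G) (x : X) :
    (A.act g (FreeMonoid.of x)).toList.length = 1 := by
  set w := A.act g (FreeMonoid.of x) with hw
  have hne : w ≠ 1 := by
    intro h
    have hx1 : FreeMonoid.of x = (1 : FreeMonoid X) := A.act_eq_one (hw ▸ h)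
    exact absurd (congrArg FreeMonoid.toList hx1)
      (by simp [FreeMonoid.toList_of, FreeMonoid.toList_one])
  obtain ⟨a, t, hat⟩ : ∃ a t, w.toList = a :: t := by
    cases h : w.toList with
    | nil => exact absurd (toListInj (by simp [h, FreeMonoid.toList_one])) hne
    | cons a t => exact ⟨a, t, rfl⟩
  have hwsplit : w = FreeMonoid.of a * FreeMonoid.ofList t := by
    apply toListInj
    simp [hat, FreeMonoid.toList_mul, FreeMonoid.toList_of]
  have hx : FreeMonoid.of x = A.act g⁻¹ (FreeMonoid.of a) *
      A.act (A.res g⁻¹ (FreeMonoid.of a)) (FreeMonoid.ofList t) := by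
    have := A.act_leftinv g (FreeMonoid.of x)
    rw [← hw, hwsplit, A.act_mul] at this
    exact this.symm
  have hlen := congrArg (fun z => (FreeMonoid.toList z).length) hx
  simp only [FreeMonoid.toList_mul, List.length_append, FreeMonoid.toList_of,
    List.length_cons, List.length_nil] at hlen
  have hne' : (A.act g⁻¹ (FreeMonoid.of a)).toList.length ≠ 0 := by
    intro h0
    have : A.act g⁻¹ (FreeMonoid.of a) = 1 := by
      apply toListInj
      simpa [FreeMonoid.toList_one] using List.length_eq_zero_iff.mp h0
    have := A.act_eq_one this
    exact absurd (congrArg FreeMonoid.toList this)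
      (by simp [FreeMonoid.toList_of, FreeMonoid.toList_one])
  have ht0 : (A.act (A.res g⁻¹ (FreeMonoid.of a)) (FreeMonoid.ofList t)).toList.length = 0 := by
    omega
  have ht1 : FreeMonoid.ofList t = 1 := by
    apply A.act_eq_one (g := A.res g⁻¹ (FreeMonoid.of a))
    apply toListInj
    simpa [FreeMonoid.toList_one] using List.length_eq_zero_iff.mp ht0
  rw [hwsplit, ht1, mul_one]
  simp [FreeMonoid.toList_of]

lemma length_act (A : SelfSimilarAction G X) (g : G) (u : FreeMonoid X) :
    (A.act g u).toList.length = u.toList.length := by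
  induction u using FreeMonoid.recOn generalizing g with
  | one => rw [A.act_one]
  | of_mul x xs ih =>
      rw [A.act_mul]
      simp only [FreeMonoid.toList_mul, List.length_append, A.length_act_of,
        FreeMonoid.toList_of, List.length_cons]
      rw [ih]
      simp

lemma mul_def (A : SelfSimilarAction G X) (p q : A.ZS) :
    p * q = ((p.1 * A.act p.2 q.1, A.res p.2 q.1 * q.2) : FreeMonoid X × G) := rfl

end SelfSimilarAction

theorem stmt6 (G : Type u) [Group G] (X : Type v) (A : SelfSimilarAction G X) :
    ((∀ a b c : A.ZS, b * a = c * a → b = c) ↔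
      ∀ (u : FreeMonoid X) (g h : G), A.act g u = u → A.act h u = u →
        A.res g u = A.res h u → g = h) ∧
    ((∀ a b c : A.ZS, b * a = c * a → b = c) →
      ∀ a b c : A.ZS, a * b = a * c → b = c) := by
  constructor
  · constructor
    · intro RC u g h hg hh hres
      have key : A.pair 1 g * A.pair u 1 = A.pair 1 h * A.pair u 1 := by
        rw [A.mul_def, A.mul_def]
        show ((1 * A.act g u, A.res g u * 1) : FreeMonoid X × G)
          = ((1 * A.act h u, A.res h u * 1) : FreeMonoid X × G)
        rw [hg, hh, hres]
      have h2 := RC _ _ _ key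
      exact congrArg (fun p : FreeMonoid X × G => p.2) h2
    · intro H a b c hbc
      obtain ⟨v, k⟩ := a
      obtain ⟨u₁, g₁⟩ := b
      obtain ⟨u₂, g₂⟩ := c
      change ((u₁ * A.act g₁ v, A.res g₁ v * k) : FreeMonoid X × G) =
        ((u₂ * A.act g₂ v, A.res g₂ v * k) : FreeMonoid X × G) at hbc
      have h1 : u₁ * A.act g₁ v = u₂ * A.act g₂ v :=
        congrArg (fun p : FreeMonoid X × G => p.1) hbc
      have h2 : A.res g₁ v * k = A.res g₂ v * k :=
        congrArg (fun p : FreeMonoid X × G => p.2) hbc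
      have hres : A.res g₁ v = A.res g₂ v := mul_right_cancel h2
      have hlen : (A.act g₁ v).toList.length = (A.act g₂ v).toList.length := by
        rw [A.length_act, A.length_act]
      have h1' : u₁.toList ++ (A.act g₁ v).toList = u₂.toList ++ (A.act g₂ v).toList := by
        have := congrArg FreeMonoid.toList h1
        simpa [FreeMonoid.toList_mul] using this
      obtain ⟨hu, hact⟩ := List.append_inj' h1' hlen
      have hu' : u₁ = u₂ := SelfSimilarAction.toListInj hu
      have hact' : A.act g₁ v = A.act g₂ v := SelfSimilarAction.toListInj hact
      have hk : A.act (g₂⁻¹ * g₁) v = v := by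
        rw [A.mul_act, hact', A.act_leftinv]
      have hrk : A.res (g₂⁻¹ * g₁) v = 1 := by
        rw [A.mul_res, hact', hres, ← A.mul_res, inv_mul_cancel, A.one_res]
      have heq := H v (g₂⁻¹ * g₁) 1 hk (A.one_act v) (by rw [hrk, A.one_res])
      have hg : g₁ = g₂ := (inv_mul_eq_one.mp heq).symm
      rw [hu', hg]
  · intro _ a b c h
    obtain ⟨u, g⟩ := a
    obtain ⟨v₁, h₁⟩ := b
    obtain ⟨v₂, h₂⟩ := c
    change ((u * A.act g v₁, A.res g v₁ * h₁) : FreeMonoid X × G) =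
      ((u * A.act g v₂, A.res g v₂ * h₂) : FreeMonoid X × G) at h
    have e1 : u * A.act g v₁ = u * A.act g v₂ :=
      congrArg (fun p : FreeMonoid X × G => p.1) h
    have e2 : A.res g v₁ * h₁ = A.res g v₂ * h₂ :=
      congrArg (fun p : FreeMonoid X × G => p.2) h
    have hv : v₁ = v₂ := A.act_inj g (mul_left_cancel e1)
    subst hv
    have : h₁ = h₂ := mul_left_cancel e2
    rw [this]
end

section
/- Let G be a group, I a set, (H_i)_{i∈I} subgroups of G and ρ_i : H_i → G group homomorphisms, and let M be the associated monoid HNN-extension ⟨G, t_i (i ∈ I) | relations of G, h t_i = t_i ρ_i(h) for all h ∈ H_i⟩. Then M is cancellative (and hence a Rees monoid) if and only if ρ_i is injective for every i ∈ I. -/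
universe u v

/-- The principal right ideal `aM` of a monoid. -/
def prIdeal {M : Type*} [Monoid M] (a : M) : Set M := Set.range fun m => a * m

/-- A left Rees monoid: a left cancellative, right rigid monoid in which every principal
right ideal is contained in only finitely many distinct principal right ideals. -/
def IsLeftReesMonoid (M : Type*) [Monoid M] : Prop :=
  (∀ a b c : M, a * b = a * c → b = c) ∧
  (∀ a b : M, (prIdeal a ∩ prIdeal b).Nonempty →
    prIdeal a ⊆ prIdeal b ∨ prIdeal b ⊆ prIdeal a) ∧
  (∀ a : M, {S : Set M | (∃ b : M, S = prIdeal b) ∧ prIdeal a ⊆ S}.Finite)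

/-- The defining relations of the monoid HNN-extension
`⟨G, tᵢ (i ∈ I) | relations of G, h tᵢ = tᵢ ρᵢ(h) for h ∈ Hᵢ⟩`. -/
inductive HNNRel (G : Type u) [Group G] {I : Type v} (H : I → Subgroup G)
    (ρ : ∀ i, H i →* G) : FreeMonoid (G ⊕ I) → FreeMonoid (G ⊕ I) → Prop
  | mul (g h : G) : HNNRel G H ρ
      (FreeMonoid.of (Sum.inl g) * FreeMonoid.of (Sum.inl h))
      (FreeMonoid.of (Sum.inl (g * h)))
  | one : HNNRel G H ρ (FreeMonoid.of (Sum.inl (1 : G))) 1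
  | hnn (i : I) (h : H i) : HNNRel G H ρ
      (FreeMonoid.of (Sum.inl (h : G)) * FreeMonoid.of (Sum.inr i))
      (FreeMonoid.of (Sum.inr i) * FreeMonoid.of (Sum.inl (ρ i h)))

/-- The monoid HNN-extension of `G` with associated subgroups `Hᵢ`, homomorphisms `ρᵢ`
and stable letters `tᵢ`. -/
abbrev HNNMonoid (G : Type u) [Group G] {I : Type v} (H : I → Subgroup G)
    (ρ : ∀ i, H i →* G) :=
  (conGen (HNNRel G H ρ)).Quotient

section HNNCore

variable {G : Type u} [Group G] {I : Type v} (H : I → Subgroup G) (ρ : ∀ i, H i →* G)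

noncomputable def rp (i : I) (q : G ⧸ H i) : G := Quotient.out q

lemma rp_spec (i : I) (q : G ⧸ H i) : QuotientGroup.mk (rp H i q) = q :=
  QuotientGroup.out_eq' q

lemma rp_mk_mem (i : I) (g : G) : (rp H i (QuotientGroup.mk g))⁻¹ * g ∈ H i := by
  rw [← QuotientGroup.eq]; exact rp_spec H i _

noncomputable def hel (i : I) (g : G) : H i :=
  ⟨(rp H i (QuotientGroup.mk g))⁻¹ * g, rp_mk_mem H i g⟩

lemma mk_mul_rp (i : I) (g a : G) :
    (QuotientGroup.mk (g * rp H i (QuotientGroup.mk a)) : G ⧸ H i) = QuotientGroup.mk (g * a) := by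
  rw [QuotientGroup.eq]
  have : (g * rp H i (QuotientGroup.mk a))⁻¹ * (g * a)
      = (rp H i (QuotientGroup.mk a))⁻¹ * a := by group
  rw [this]; exact rp_mk_mem H i a

lemma hel_comp (i : I) (g a : G) :
    hel H i (g * rp H i (QuotientGroup.mk a)) * hel H i a = hel H i (g * a) := by
  apply Subtype.ext
  have hq := mk_mul_rp H i g a
  simp only [hel, MulMemClass.coe_mul, hq]
  group

lemma hel_one (i : I) (g : G) (hg : g ∈ H i) : hel H i g = hel H i 1 * ⟨g, hg⟩ := by
  have hq : (QuotientGroup.mk g : G ⧸ H i) = QuotientGroup.mk 1 := by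
    rw [QuotientGroup.eq]; simpa using (H i).inv_mem hg
  apply Subtype.ext
  simp only [hel, MulMemClass.coe_mul, hq]
  group

lemma hel_rp (i : I) (q : G ⧸ H i) : hel H i (rp H i q) = 1 := by
  apply Subtype.ext
  simp only [hel, rp_spec, OneMemClass.coe_one]
  group

/-- normal forms -/
abbrev NFL := List ((i : I) × (G ⧸ H i))

noncomputable def pushL : G → NFL H → G → NFL H × G
  | g, [], k => ([], g * k)
  | g, ⟨i, q⟩ :: L, k =>
    ((⟨i, QuotientGroup.mk (g * rp H i q)⟩ : (i : I) × (G ⧸ H i)) ::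
       (pushL (ρ i (hel H i (g * rp H i q))) L k).1,
     (pushL (ρ i (hel H i (g * rp H i q))) L k).2)

noncomputable def push (g : G) (x : NFL H × G) : NFL H × G := pushL H ρ g x.1 x.2

lemma pushL_nil (g k : G) : pushL H ρ g [] k = ([], g * k) := rfl

lemma pushL_cons (g k : G) (i : I) (q : G ⧸ H i) (L : NFL H) :
    pushL H ρ g (⟨i, q⟩ :: L) k =
      ((⟨i, QuotientGroup.mk (g * rp H i q)⟩ : (i : I) × (G ⧸ H i)) ::
         (pushL H ρ (ρ i (hel H i (g * rp H i q))) L k).1,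
       (pushL H ρ (ρ i (hel H i (g * rp H i q))) L k).2) := rfl

lemma pushL_mul (L : NFL H) : ∀ (g g' k : G),
    pushL H ρ (g * g') L k = pushL H ρ g (pushL H ρ g' L k).1 (pushL H ρ g' L k).2 := by
  induction L with
  | nil => intro g g' k; simp [pushL_nil, mul_assoc]
  | cons e L ih =>
    obtain ⟨i, q⟩ := e
    intro g g' k
    rw [pushL_cons, pushL_cons, pushL_cons]
    have hq : (QuotientGroup.mk (g * rp H i (QuotientGroup.mk (g' * rp H i q))) : G ⧸ H i)
        = QuotientGroup.mk (g * g' * rp H i q) := by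
      rw [mk_mul_rp, mul_assoc]
    have hh : ρ i (hel H i (g * rp H i (QuotientGroup.mk (g' * rp H i q)))) *
        ρ i (hel H i (g' * rp H i q)) = ρ i (hel H i (g * g' * rp H i q)) := by
      rw [← map_mul, hel_comp, mul_assoc]
    rw [hq, ← ih, hh]

lemma pushL_one (L : NFL H) : ∀ k, pushL H ρ 1 L k = (L, k) := by
  induction L with
  | nil => intro k; simp [pushL_nil]
  | cons e L ih =>
    obtain ⟨i, q⟩ := e
    intro k
    rw [pushL_cons]
    have h1 : (QuotientGroup.mk (1 * rp H i q) : G ⧸ H i) = q := by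
      rw [one_mul, rp_spec]
    have h2 : hel H i (1 * rp H i q) = 1 := by rw [one_mul, hel_rp]
    rw [h1, h2, map_one, ih]

lemma push_mul (g g' : G) (x : NFL H × G) :
    push H ρ (g * g') x = push H ρ g (push H ρ g' x) := by
  simp only [push, pushL_mul]

lemma push_one (x : NFL H × G) : push H ρ 1 x = x := by
  simp only [push, pushL_one]

lemma push_injective (g : G) : Function.Injective (push H ρ g) := by
  intro x y h
  have := congrArg (push H ρ g⁻¹) h
  rwa [← push_mul, ← push_mul, inv_mul_cancel, push_one, push_one] at this

lemma pushL_len (L : NFL H) : ∀ g k, ((pushL H ρ g L k).1).length = L.length := by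
  induction L with
  | nil => intro g k; rfl
  | cons e L ih =>
    obtain ⟨i, q⟩ := e
    intro g k
    rw [pushL_cons]
    simp [ih]

noncomputable def tpush (i : I) (g : G) (x : NFL H × G) : NFL H × G :=
  ((⟨i, QuotientGroup.mk g⟩ : (i : I) × (G ⧸ H i)) :: (push H ρ (ρ i (hel H i g)) x).1,
   (push H ρ (ρ i (hel H i g)) x).2)

lemma push_tpush (g : G) (i : I) (g' : G) (x : NFL H × G) :
    push H ρ g (tpush H ρ i g' x) = tpush H ρ i (g * g') x := by
  show pushL H ρ g (⟨i, QuotientGroup.mk g'⟩ :: (push H ρ (ρ i (hel H i g')) x).1)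
      (push H ρ (ρ i (hel H i g')) x).2 = _
  rw [pushL_cons]
  have hq := mk_mul_rp H i g g'
  have hh : ρ i (hel H i (g * rp H i (QuotientGroup.mk g'))) * ρ i (hel H i g')
      = ρ i (hel H i (g * g')) := by rw [← map_mul, hel_comp]
  show ((⟨i, QuotientGroup.mk (g * rp H i (QuotientGroup.mk g'))⟩ : (i : I) × (G ⧸ H i)) ::
      (push H ρ (ρ i (hel H i (g * rp H i (QuotientGroup.mk g'))))
        (push H ρ (ρ i (hel H i g')) x)).1,
      (push H ρ (ρ i (hel H i (g * rp H i (QuotientGroup.mk g'))))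
        (push H ρ (ρ i (hel H i g')) x)).2) = _
  rw [← push_mul, hh, hq]
  rfl

lemma tpush_rep (i : I) (q : G ⧸ H i) (x : NFL H × G) :
    tpush H ρ i (rp H i q) x = (⟨i, q⟩ :: x.1, x.2) := by
  rw [tpush, hel_rp, map_one, push_one, rp_spec]

lemma tpush_injective (i : I) (g : G) : Function.Injective (tpush H ρ i g) := by
  intro x y h
  simp only [tpush, Prod.mk.injEq, List.cons.injEq] at h
  exact push_injective H ρ _ (Prod.ext h.1.2 h.2)

noncomputable def mulNF (y x : NFL H × G) : NFL H × G :=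
  (y.1 ++ (push H ρ y.2 x).1, (push H ρ y.2 x).2)

lemma push_mulNF (x : NFL H × G) (L : NFL H) : ∀ (k g : G),
    push H ρ g (mulNF H ρ (L, k) x) = mulNF H ρ (push H ρ g (L, k)) x := by
  induction L with
  | nil =>
    intro k g
    have h1 : mulNF H ρ (([] : NFL H), k) x = push H ρ k x := by
      simp [mulNF]
    rw [h1, ← push_mul]
    show _ = mulNF H ρ (([] : NFL H), g * k) x
    simp [mulNF]
  | cons e L ih =>
    obtain ⟨i, q⟩ := e
    intro k g
    have h1 : mulNF H ρ ((⟨i, q⟩ :: L : NFL H), k) x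
        = tpush H ρ i (rp H i q) (mulNF H ρ (L, k) x) := by
      rw [tpush_rep]
      simp [mulNF]
    rw [h1, push_tpush, tpush, ih]
    show _ = mulNF H ρ (pushL H ρ g (⟨i, q⟩ :: L) k) x
    rw [pushL_cons]
    simp [mulNF, tpush, push]

lemma push_mulNF' (x y : NFL H × G) (g : G) :
    push H ρ g (mulNF H ρ y x) = mulNF H ρ (push H ρ g y) x := push_mulNF H ρ x y.1 y.2 g

lemma tpush_mulNF (x y : NFL H × G) (i : I) (g : G) :
    tpush H ρ i g (mulNF H ρ y x) = mulNF H ρ (tpush H ρ i g y) x := by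
  rw [tpush, push_mulNF']
  simp [tpush, mulNF]

lemma pushL_cancel (hρ : ∀ i, Function.Injective (ρ i)) (L : NFL H) :
    ∀ (k g g' : G), pushL H ρ g L k = pushL H ρ g' L k → g = g' := by
  induction L with
  | nil =>
    intro k g g' h
    simp only [pushL_nil, Prod.mk.injEq] at h
    exact mul_right_cancel h.2
  | cons e L ih =>
    obtain ⟨i, q⟩ := e
    intro k g g' h
    rw [pushL_cons, pushL_cons] at h
    simp only [Prod.mk.injEq, List.cons.injEq] at h
    obtain ⟨⟨hq, htl⟩, hsnd⟩ := h
    have hq' : (QuotientGroup.mk (g * rp H i q) : G ⧸ H i)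
        = QuotientGroup.mk (g' * rp H i q) := by
      have h2 := (Sigma.mk.inj_iff.mp hq).2
      exact eq_of_heq h2
    have heq : pushL H ρ (ρ i (hel H i (g * rp H i q))) L k
        = pushL H ρ (ρ i (hel H i (g' * rp H i q))) L k := Prod.ext htl hsnd
    have hr := ih k _ _ heq
    have hhel : hel H i (g * rp H i q) = hel H i (g' * rp H i q) := hρ i hr
    have hval : (rp H i (QuotientGroup.mk (g * rp H i q)))⁻¹ * (g * rp H i q)
        = (rp H i (QuotientGroup.mk (g' * rp H i q)))⁻¹ * (g' * rp H i q) :=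
      congrArg Subtype.val hhel
    rw [hq'] at hval
    have : g * rp H i q = g' * rp H i q := mul_left_cancel hval
    exact mul_right_cancel this

noncomputable def act : G ⊕ I → Function.End (NFL H × G)
  | .inl g => push H ρ g
  | .inr i => tpush H ρ i 1

noncomputable def evH : FreeMonoid (G ⊕ I) →* Function.End (NFL H × G) :=
  FreeMonoid.lift (act H ρ)

lemma rel_le : conGen (HNNRel G H ρ) ≤ Con.ker (evH H ρ) := by
  apply Con.conGen_le.mpr
  rintro x y (⟨g, h⟩ | _ | ⟨i, h⟩) <;> rw [Con.ker_rel]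
  · rw [map_mul, evH, FreeMonoid.lift_eval_of, FreeMonoid.lift_eval_of]
    funext z
    show push H ρ g (push H ρ h z) = push H ρ (g * h) z
    rw [push_mul]
  · rw [evH, FreeMonoid.lift_eval_of, map_one]
    funext z
    show push H ρ 1 z = z
    exact push_one H ρ z
  · rw [map_mul, map_mul, evH, FreeMonoid.lift_eval_of, FreeMonoid.lift_eval_of,
      FreeMonoid.lift_eval_of]
    funext z
    show push H ρ (h : G) (tpush H ρ i 1 z) = tpush H ρ i 1 (push H ρ (ρ i h) z)
    rw [push_tpush, mul_one]
    rw [tpush, tpush, ← push_mul, ← map_mul, ← hel_one H i (h : G) h.2]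
    have hq : (QuotientGroup.mk ((h : H i) : G) : G ⧸ H i) = QuotientGroup.mk 1 :=
      QuotientGroup.eq.mpr (by simpa using (H i).inv_mem h.2)
    rw [hq]

noncomputable def φ : HNNMonoid G H ρ →* Function.End (NFL H × G) :=
  Con.lift _ (evH H ρ) (rel_le H ρ)

noncomputable def nf (a : HNNMonoid G H ρ) : NFL H × G := φ H ρ a ([], 1)

/-- the image of `g : G` in the HNN monoid -/
def mkG (g : G) : HNNMonoid G H ρ := (FreeMonoid.of (Sum.inl g) : FreeMonoid (G ⊕ I))

/-- the stable letter -/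
def tM (i : I) : HNNMonoid G H ρ := (FreeMonoid.of (Sum.inr i) : FreeMonoid (G ⊕ I))

lemma mkG_mul (g h : G) : mkG H ρ (g * h) = mkG H ρ g * mkG H ρ h := by
  rw [mkG, mkG, mkG, ← Con.coe_mul]
  exact ((conGen (HNNRel G H ρ)).eq).mpr
    (ConGen.Rel.of _ _ (HNNRel.mul g h)).symm

lemma mkG_one : mkG H ρ (1 : G) = 1 := by
  rw [mkG, ← Con.coe_one]
  exact ((conGen (HNNRel G H ρ)).eq).mpr (ConGen.Rel.of _ _ HNNRel.one)

lemma hnn_eq (i : I) (h : H i) :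
    mkG H ρ (h : G) * tM H ρ i = tM H ρ i * mkG H ρ (ρ i h) := by
  rw [mkG, mkG, tM, ← Con.coe_mul, ← Con.coe_mul]
  exact ((conGen (HNNRel G H ρ)).eq).mpr (ConGen.Rel.of _ _ (HNNRel.hnn i h))

lemma φ_mkG (g : G) : φ H ρ (mkG H ρ g) = push H ρ g := by
  rw [mkG, φ, Con.lift_coe, evH, FreeMonoid.lift_eval_of]; rfl

lemma φ_tM (i : I) : φ H ρ (tM H ρ i) = tpush H ρ i 1 := by
  rw [tM, φ, Con.lift_coe, evH, FreeMonoid.lift_eval_of]; rfl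

noncomputable def embL : NFL H → HNNMonoid G H ρ
  | [] => 1
  | ⟨i, q⟩ :: L => mkG H ρ (rp H i q) * tM H ρ i * embL L

noncomputable def emb (x : NFL H × G) : HNNMonoid G H ρ := embL H ρ x.1 * mkG H ρ x.2

lemma emb_nil (k : G) : emb H ρ ([], k) = mkG H ρ k := by
  rw [emb, embL]; exact one_mul _

lemma emb_cons (i : I) (q : G ⧸ H i) (L : NFL H) (k : G) :
    emb H ρ (⟨i, q⟩ :: L, k) = mkG H ρ (rp H i q) * (tM H ρ i * emb H ρ (L, k)) := by
  rw [emb, embL, emb]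
  simp [mul_assoc]

lemma emb_push (x : NFL H × G) : ∀ (L : NFL H) (k g : G),
    emb H ρ (push H ρ g (L, k)) = mkG H ρ g * emb H ρ (L, k) := by
  intro L
  induction L with
  | nil =>
    intro k g
    show emb H ρ (pushL H ρ g [] k) = _
    rw [pushL_nil, emb_nil, emb_nil, mkG_mul]
  | cons e L ih =>
    obtain ⟨i, q⟩ := e
    intro k g
    show emb H ρ (pushL H ρ g (⟨i, q⟩ :: L) k) = _
    rw [pushL_cons]
    have h1 : emb H ρ ((⟨i, QuotientGroup.mk (g * rp H i q)⟩ : (i : I) × (G ⧸ H i)) ::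
        (pushL H ρ ((ρ i) (hel H i (g * rp H i q))) L k).1,
        (pushL H ρ ((ρ i) (hel H i (g * rp H i q))) L k).2)
        = mkG H ρ (rp H i (QuotientGroup.mk (g * rp H i q))) *
          (tM H ρ i * emb H ρ (push H ρ (ρ i (hel H i (g * rp H i q))) (L, k))) := by
      rw [emb_cons]; rfl
    rw [h1, ih, ← mul_assoc (tM H ρ i), ← hnn_eq, emb_cons]
    simp only [← mul_assoc]
    rw [← mkG_mul]
    have hval : rp H i (QuotientGroup.mk (g * rp H i q)) * ((hel H i (g * rp H i q) : H i) : G)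
        = g * rp H i q := by
      rw [hel]; simp [mul_assoc]
    rw [hval, mkG_mul]

lemma emb_push' (x : NFL H × G) (g : G) :
    emb H ρ (push H ρ g x) = mkG H ρ g * emb H ρ x := by
  have := emb_push H ρ x x.1 x.2 g
  simpa using this

lemma emb_tpush (x : NFL H × G) (i : I) (g : G) :
    emb H ρ (tpush H ρ i g x) = mkG H ρ g * (tM H ρ i * emb H ρ x) := by
  have h1 : emb H ρ (tpush H ρ i g x)
      = mkG H ρ (rp H i (QuotientGroup.mk g)) *
        (tM H ρ i * emb H ρ (push H ρ (ρ i (hel H i g)) x)) := by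
    rw [tpush]
    have := emb_cons H ρ i (QuotientGroup.mk g) (push H ρ (ρ i (hel H i g)) x).1
      (push H ρ (ρ i (hel H i g)) x).2
    simpa using this
  rw [h1, emb_push', ← mul_assoc (tM H ρ i), ← hnn_eq]
  simp only [← mul_assoc]
  rw [← mkG_mul]
  have hval : rp H i (QuotientGroup.mk g) * ((hel H i g : H i) : G) = g := by
    rw [hel]; simp [mul_assoc]
  rw [hval]

lemma emb_nf (a : HNNMonoid G H ρ) : emb H ρ (nf H ρ a) = a := by
  induction a using Con.induction_on with
  | _ w =>
    induction w using FreeMonoid.recOn with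
    | one =>
      rw [Con.coe_one, nf, map_one]
      show emb H ρ (([], 1) : NFL H × G) = 1
      rw [emb_nil, mkG_one]
    | of_mul x w ihw =>
      rw [Con.coe_mul, nf, map_mul]
      show emb H ρ (φ H ρ ((FreeMonoid.of x : FreeMonoid (G ⊕ I)) : HNNMonoid G H ρ)
        (φ H ρ (w : HNNMonoid G H ρ) ([], 1))) = _
      cases x with
      | inl g =>
        rw [show ((FreeMonoid.of (Sum.inl g) : FreeMonoid (G ⊕ I)) : HNNMonoid G H ρ)
            = mkG H ρ g from rfl, φ_mkG]
        show emb H ρ (push H ρ g (nf H ρ (w : HNNMonoid G H ρ))) = _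
        rw [emb_push', ihw]
      | inr i =>
        rw [show ((FreeMonoid.of (Sum.inr i) : FreeMonoid (G ⊕ I)) : HNNMonoid G H ρ)
            = tM H ρ i from rfl, φ_tM]
        show emb H ρ (tpush H ρ i 1 (nf H ρ (w : HNNMonoid G H ρ))) = _
        rw [emb_tpush, ihw, mkG_one, one_mul]

lemma nf_emb (L : NFL H) : ∀ k : G, nf H ρ (emb H ρ (L, k)) = (L, k) := by
  induction L with
  | nil =>
    intro k
    rw [emb_nil, nf, φ_mkG]
    show pushL H ρ k [] 1 = _
    rw [pushL_nil, mul_one]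
  | cons e L ih =>
    obtain ⟨i, q⟩ := e
    intro k
    rw [emb_cons, nf, map_mul, map_mul, φ_mkG, φ_tM]
    show push H ρ (rp H i q) (tpush H ρ i 1 (nf H ρ (emb H ρ (L, k)))) = _
    rw [ih, push_tpush, mul_one, tpush_rep]

lemma ev_mulNF (a : HNNMonoid G H ρ) (x : NFL H × G) :
    φ H ρ a x = mulNF H ρ (nf H ρ a) x := by
  induction a using Con.induction_on with
  | _ w =>
    induction w using FreeMonoid.recOn with
    | one =>
      rw [Con.coe_one, map_one, nf, map_one]
      show x = mulNF H ρ (([], 1) : NFL H × G) x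
      have : mulNF H ρ (([], 1) : NFL H × G) x = push H ρ 1 x := by
        simp [mulNF]
      rw [this, push_one]
    | of_mul y w ihw =>
      rw [Con.coe_mul, map_mul]
      show φ H ρ ((FreeMonoid.of y : FreeMonoid (G ⊕ I)) : HNNMonoid G H ρ)
        (φ H ρ (w : HNNMonoid G H ρ) x) = _
      have hnfmul : nf H ρ (((FreeMonoid.of y : FreeMonoid (G ⊕ I)) : HNNMonoid G H ρ) *
          (w : HNNMonoid G H ρ))
          = φ H ρ ((FreeMonoid.of y : FreeMonoid (G ⊕ I)) : HNNMonoid G H ρ)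
            (nf H ρ (w : HNNMonoid G H ρ)) := by
        rw [nf, map_mul]; rfl
      cases y with
      | inl g =>
        rw [show ((FreeMonoid.of (Sum.inl g) : FreeMonoid (G ⊕ I)) : HNNMonoid G H ρ)
            = mkG H ρ g from rfl, φ_mkG] at hnfmul ⊢
        show push H ρ g (φ H ρ (w : HNNMonoid G H ρ) x) = _
        rw [ihw, push_mulNF', hnfmul]
      | inr i =>
        rw [show ((FreeMonoid.of (Sum.inr i) : FreeMonoid (G ⊕ I)) : HNNMonoid G H ρ)
            = tM H ρ i from rfl, φ_tM] at hnfmul ⊢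
        show tpush H ρ i 1 (φ H ρ (w : HNNMonoid G H ρ) x) = _
        rw [ihw, tpush_mulNF, hnfmul]

lemma nf_mul (a b : HNNMonoid G H ρ) :
    nf H ρ (a * b) = mulNF H ρ (nf H ρ a) (nf H ρ b) := by
  rw [nf, map_mul]
  show φ H ρ a (φ H ρ b ([], 1)) = _
  rw [ev_mulNF]; rfl

lemma φ_injective (a : HNNMonoid G H ρ) : Function.Injective (φ H ρ a) := by
  induction a using Con.induction_on with
  | _ w =>
    induction w using FreeMonoid.recOn with
    | one =>
      rw [Con.coe_one, map_one]
      exact fun x y h => h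
    | of_mul y w ihw =>
      rw [Con.coe_mul, map_mul]
      have h1 : Function.Injective
          (φ H ρ ((FreeMonoid.of y : FreeMonoid (G ⊕ I)) : HNNMonoid G H ρ)) := by
        cases y with
        | inl g =>
          rw [show ((FreeMonoid.of (Sum.inl g) : FreeMonoid (G ⊕ I)) : HNNMonoid G H ρ)
              = mkG H ρ g from rfl, φ_mkG]
          exact push_injective H ρ g
        | inr i =>
          rw [show ((FreeMonoid.of (Sum.inr i) : FreeMonoid (G ⊕ I)) : HNNMonoid G H ρ)
              = tM H ρ i from rfl, φ_tM]
          exact tpush_injective H ρ i 1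
      exact h1.comp ihw

lemma nf_injective : Function.Injective (nf H ρ) := by
  intro a b h
  rw [← emb_nf H ρ a, ← emb_nf H ρ b, h]

lemma left_cancel (a b c : HNNMonoid G H ρ) (h : a * b = a * c) : b = c := by
  apply nf_injective H ρ
  apply φ_injective H ρ a
  have h1 := congrArg (nf H ρ) h
  rw [nf, nf, map_mul, map_mul] at h1
  exact h1

lemma right_cancel (hρ : ∀ i, Function.Injective (ρ i)) (a b c : HNNMonoid G H ρ)
    (h : b * a = c * a) : b = c := by
  apply nf_injective H ρ
  have h1 := congrArg (nf H ρ) h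
  rw [nf_mul, nf_mul] at h1
  simp only [mulNF, Prod.mk.injEq] at h1
  obtain ⟨hfst, hsnd⟩ := h1
  have hlen : (push H ρ (nf H ρ b).2 (nf H ρ a)).1.length
      = (push H ρ (nf H ρ c).2 (nf H ρ a)).1.length := by
    show (pushL H ρ _ _ _).1.length = (pushL H ρ _ _ _).1.length
    rw [pushL_len, pushL_len]
  obtain ⟨hL, hA⟩ := List.append_inj' hfst hlen
  have hpush : push H ρ (nf H ρ b).2 (nf H ρ a) = push H ρ (nf H ρ c).2 (nf H ρ a) :=
    Prod.ext hA hsnd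
  have hk : (nf H ρ b).2 = (nf H ρ c).2 :=
    pushL_cancel H ρ hρ (nf H ρ a).1 (nf H ρ a).2 _ _ hpush
  exact Prod.ext hL hk

lemma nf_mkG (g : G) : nf H ρ (mkG H ρ g) = (([] : NFL H), g) := by
  rw [nf, φ_mkG]
  show pushL H ρ g [] 1 = _
  rw [pushL_nil, mul_one]

lemma rho_injective_of_cancel
    (hc : ∀ a b c : HNNMonoid G H ρ, b * a = c * a → b = c) (i : I) :
    Function.Injective (ρ i) := by
  intro h h' heq
  have e1 : mkG H ρ (h : G) * tM H ρ i = mkG H ρ (h' : G) * tM H ρ i := by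
    rw [hnn_eq, hnn_eq, heq]
  have e2 : mkG H ρ (h : G) = mkG H ρ (h' : G) := hc (tM H ρ i) _ _ e1
  have e3 := congrArg (nf H ρ) e2
  rw [nf_mkG, nf_mkG] at e3
  exact Subtype.ext (congrArg Prod.snd e3)

lemma mem_prIdeal_iff (a x : HNNMonoid G H ρ) :
    x ∈ prIdeal a ↔ (nf H ρ a).1 <+: (nf H ρ x).1 := by
  constructor
  · rintro ⟨m, rfl⟩
    rw [nf_mul]
    exact ⟨(push H ρ (nf H ρ a).2 (nf H ρ m)).1, rfl⟩
  · rintro ⟨K, hK⟩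
    refine ⟨emb H ρ (push H ρ (nf H ρ a).2⁻¹ (K, (nf H ρ x).2)), ?_⟩
    apply nf_injective H ρ
    rw [nf_mul]
    have h1 : nf H ρ (emb H ρ (push H ρ (nf H ρ a).2⁻¹ (K, (nf H ρ x).2)))
        = push H ρ (nf H ρ a).2⁻¹ (K, (nf H ρ x).2) := by
      have := nf_emb H ρ (push H ρ (nf H ρ a).2⁻¹ (K, (nf H ρ x).2)).1
        (push H ρ (nf H ρ a).2⁻¹ (K, (nf H ρ x).2)).2
      simpa using this
    rw [h1, mulNF, ← push_mul, mul_inv_cancel, push_one]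
    exact Prod.ext hK rfl

end HNNCore


/-- a monoid HNN-extension of a group is cancellative (and hence a Rees
monoid, being also a left Rees monoid) if and only if every `ρᵢ` is injective. -/
theorem stmt9 (G : Type u) [Group G] {I : Type v} (H : I → Subgroup G)
    (ρ : ∀ i, H i →* G) :
    (((∀ a b c : HNNMonoid G H ρ, a * b = a * c → b = c) ∧
      (∀ a b c : HNNMonoid G H ρ, b * a = c * a → b = c)) ↔
        ∀ i, Function.Injective (ρ i)) ∧
    (((∀ a b c : HNNMonoid G H ρ, a * b = a * c → b = c) ∧
      (∀ a b c : HNNMonoid G H ρ, b * a = c * a → b = c)) →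
        IsLeftReesMonoid (HNNMonoid G H ρ)) := by
  constructor
  · constructor
    · rintro ⟨hl, hr⟩ i
      exact rho_injective_of_cancel H ρ hr i
    · intro hρ
      exact ⟨left_cancel H ρ, right_cancel H ρ hρ⟩
  · rintro ⟨hl, hr⟩
    refine ⟨hl, ?_, ?_⟩
    · rintro a b ⟨c, hca, hcb⟩
      have ha := (mem_prIdeal_iff H ρ a c).mp hca
      have hb := (mem_prIdeal_iff H ρ b c).mp hcb
      rcases List.prefix_or_prefix_of_prefix ha hb with hab | hba
      · right; intro x hx
        exact (mem_prIdeal_iff H ρ a x).mpr (hab.trans ((mem_prIdeal_iff H ρ b x).mp hx))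
      · left; intro x hx
        exact (mem_prIdeal_iff H ρ b x).mpr (hba.trans ((mem_prIdeal_iff H ρ a x).mp hx))
    · intro a
      apply Set.Finite.subset (Set.finite_range
        (fun n : Fin ((nf H ρ a).1.length + 1) =>
          prIdeal (emb H ρ ((((nf H ρ a).1.take n, 1)) : NFL H × G))))
      rintro S ⟨⟨b, rfl⟩, hsub⟩
      have hab : a ∈ prIdeal b := hsub ⟨1, mul_one a⟩
      have hpre := (mem_prIdeal_iff H ρ b a).mp hab
      refine ⟨⟨(nf H ρ b).1.length, by have := hpre.length_le; omega⟩, ?_⟩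
      have htake : (nf H ρ a).1.take (nf H ρ b).1.length = (nf H ρ b).1 :=
        (List.prefix_iff_eq_take.mp hpre).symm
      have hnfe : nf H ρ (emb H ρ
          ((((nf H ρ a).1.take (nf H ρ b).1.length, 1)) : NFL H × G))
          = ((nf H ρ a).1.take (nf H ρ b).1.length, 1) :=
        nf_emb H ρ _ _
      ext x
      rw [mem_prIdeal_iff, mem_prIdeal_iff, hnfe]
      show (nf H ρ a).1.take (nf H ρ b).1.length <+: (nf H ρ x).1 ↔ _
      rw [htake]
end
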